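/- Let X be a space of bounded measurable functions on Ω with norm ‖f‖ = ‖f‖_∞ + V(f), where V is a seminorm invariant under adding constants (V(f + c) = V(f)). Assume there is D > 0 such that for every probability measure μ and every f with μ(f) = 0 one has ‖f‖_∞ ≤ D·V(f). Then for any probability measure μ, the operator π : X → X defined by πf = f - μ(f)·1 satisfies ‖π‖ ≤ (2D+2)/(D+2). -/

import Mathlib

open Set MeasureTheory

/-- with `‖f‖ = ‖f‖_∞ + V(f)`, `V` invariant under adding constants, and
`‖f‖_∞ ≤ D·V(f)` whenever `μ(f) = 0`, the centering projection `π f = f - μ(f)·1` satisfies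
`‖π‖ ≤ (2D+2)/(D+2)`. -/
theorem centering_projection_norm {Ω : Type*} [MeasurableSpace Ω]
    (V : (Ω → ℝ) → ℝ) (hV0 : ∀ f, 0 ≤ V f)
    (hVc : ∀ (f : Ω → ℝ) (c : ℝ), V (fun x => f x + c) = V f)
    (memX : (Ω → ℝ) → Prop)
    (hmemX : ∀ f, memX f ↔ Measurable f ∧ BddAbove (Set.range fun x => |f x|))
    (D : ℝ) (hD : 0 < D)
    (hDbound : ∀ μ : Measure Ω, IsProbabilityMeasure μ →
      ∀ f, memX f → (∫ x, f x ∂μ) = 0 → ∀ x, |f x| ≤ D * V f)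
    (μ : Measure Ω) [IsProbabilityMeasure μ] :
    ∀ f, memX f →
      sSup (Set.range fun x => |f x - ∫ y, f y ∂μ|) + V (fun x => f x - ∫ y, f y ∂μ) ≤
        (2 * D + 2) / (D + 2) * (sSup (Set.range fun x => |f x|) + V f) := by
  intro f hf
  haveI : Nonempty Ω := by
    by_contra h
    rw [not_nonempty_iff] at h
    have h1 : μ Set.univ = 1 := measure_univ
    rw [Set.univ_eq_empty_iff.mpr h, measure_empty] at h1
    exact zero_ne_one h1
  rw [hmemX] at hf
  obtain ⟨hfm, hfbdd⟩ := hf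
  set m : ℝ := ∫ y, f y ∂μ with hm
  set a : ℝ := sSup (Set.range fun x => |f x|) with ha
  set v : ℝ := V f with hv
  have hfa : ∀ x, |f x| ≤ a := fun x => le_csSup hfbdd (Set.mem_range_self x)
  have ha0 : 0 ≤ a := (abs_nonneg _).trans (hfa (Classical.arbitrary Ω))
  obtain ⟨C, hC⟩ := hfbdd
  have hCb : ∀ x, |f x| ≤ C := fun x => hC (Set.mem_range_self x)
  have hint : Integrable f μ :=
    (integrable_const C).mono' hfm.aestronglyMeasurable (ae_of_all _ fun x => hCb x)
  -- |m| ≤ a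
  have hma : |m| ≤ a := by
    have h1 : |∫ y, f y ∂μ| ≤ ∫ y, |f y| ∂μ := by
      simpa [Real.norm_eq_abs] using norm_integral_le_integral_norm (μ := μ) f
    have h2 : (∫ y, |f y| ∂μ) ≤ ∫ _y, a ∂μ :=
      integral_mono hint.abs (integrable_const a) hfa
    rw [integral_const, probReal_univ] at h2
    simpa using h1.trans h2
  -- V g = V f
  have hVg : V (fun x => f x - m) = v := by
    have : (fun x => f x - m) = fun x => f x + (-m) := by funext x; ring
    rw [this, hVc]
  -- g in X
  have hgmem : memX (fun x => f x - m) := by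
    rw [hmemX]
    refine ⟨hfm.sub measurable_const, ⟨C + |m|, ?_⟩⟩
    rintro y ⟨x, rfl⟩
    calc |f x - m| ≤ |f x| + |m| := abs_sub (f x) m
      _ ≤ C + |m| := by linarith [hCb x]
  -- ∫ g = 0
  have hg0 : (∫ x, f x - m ∂μ) = 0 := by
    rw [integral_sub hint (integrable_const m), integral_const, probReal_univ]
    simp [hm]
  have hgD : ∀ x, |f x - m| ≤ D * v := by
    have := hDbound μ inferInstance (fun x => f x - m) hgmem hg0
    simpa [hVg] using this
  have hg2a : ∀ x, |f x - m| ≤ 2 * a := fun x =>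
    (abs_sub (f x) m).trans (by linarith [hfa x])
  set S : ℝ := sSup (Set.range fun x => |f x - m|) with hS
  have hSD : S ≤ D * v := by
    apply Real.sSup_le
    · rintro y ⟨x, rfl⟩; exact hgD x
    · exact mul_nonneg hD.le (hV0 f)
  have hS2a : S ≤ 2 * a := by
    apply Real.sSup_le
    · rintro y ⟨x, rfl⟩; exact hg2a x
    · linarith
  have hv0 : 0 ≤ v := hV0 f
  rw [hVg, div_mul_eq_mul_div, le_div_iff₀ (by linarith : (0:ℝ) < D + 2)]
  nlinarith [mul_nonneg hD.le hv0, mul_nonneg hD.le ha0, hSD, hS2a]
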